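/- Let Ψ be a root datum with finite automorphism group Γ stabilizing a base. The lattices X̄* (coinvariants of X* modulo torsion) and X̄_* = X_*^Γ are in perfect duality via the pairing ⟨x̄, λ̄⟩ := ⟨ι(x̄), i_*(λ̄)⟩, and under this pairing the projection i* : X* → X̄* is the transpose of the inclusion i_* : X̄_* → X_*, i.e., ⟨i*(x), λ̄⟩ = ⟨x, i_*(λ̄)⟩ for all x ∈ X*, λ̄ ∈ X̄_*. -/

import Mathlib

open scoped BigOperators Classical

/-- The multiplicative group structure on `AddAut A` (composition), as in the older Mathlib. -/
instance AddAut.mulGroupOld (A : Type*) [Add A] : Group (AddAut A) where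
  mul g h := AddEquiv.trans h g
  one := AddEquiv.refl _
  inv := AddEquiv.symm
  mul_assoc _ _ _ := rfl
  one_mul _ := rfl
  mul_one _ := rfl
  inv_mul_cancel := AddEquiv.self_trans_symm

/-- A (not necessarily reduced) root datum `Ψ = (X*, Φ, X_*, Φ^∨)`:
dual lattices `X`, `Y` in perfect duality, a finite set of roots, and a
coroot map satisfying the usual axioms. -/
structure ZRootDatum (X Y : Type) [AddCommGroup X] [AddCommGroup Y] : Type where
  pair : X →+ Y →+ ℤ
  perfect : Function.Bijective fun x : X => pair x
  perfect' : Function.Bijective fun y : Y => pair.flip y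
  roots : Finset X
  coroot : X → Y
  pair_self : ∀ β ∈ roots, pair β (coroot β) = 2
  reflect_mem : ∀ β ∈ roots, ∀ x ∈ roots, x - pair x (coroot β) • β ∈ roots
  coreflect_mem : ∀ β ∈ roots, ∀ β' ∈ roots,
    ∃ β'' ∈ roots, coroot β' - pair β (coroot β') • coroot β = coroot β''

variable {X Y Γ : Type} [AddCommGroup X] [AddCommGroup Y] [Group Γ]

/-- The Weyl group of a root datum: the subgroup of `Aut(X)` generated by the
reflections `w_β : x ↦ x - ⟨x, β^∨⟩β` through the roots. -/
def ZRootDatum.weylGroup (Ψ : ZRootDatum X Y) : Subgroup (AddAut X) :=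
  Subgroup.closure {w : AddAut X | ∃ β ∈ Ψ.roots, ∀ x, w x = x - Ψ.pair x (Ψ.coroot β) • β}

/-- `Δ` is a base (system of simple roots) of the root datum. -/
def ZRootDatum.IsBase (Ψ : ZRootDatum X Y) (Δ : Finset X) : Prop :=
  (↑Δ : Set X) ⊆ ↑Ψ.roots ∧
  LinearIndependent ℤ (fun a : ↥(↑Δ : Set X) => (a : X)) ∧
  ∀ β ∈ Ψ.roots, ∃ c : X → ℤ,
    β = ∑ a ∈ Δ, c a • a ∧ ((∀ a ∈ Δ, 0 ≤ c a) ∨ (∀ a ∈ Δ, c a ≤ 0))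

/-- A group `Γ` acting (via `ρ` on `X*` and `ρ'` on `X_*`) by automorphisms of
the root datum `Ψ`. -/
structure RDAction (Ψ : ZRootDatum X Y) (ρ : Γ →* AddAut X) (ρ' : Γ →* AddAut Y) : Prop where
  pair_eq : ∀ γ x y, Ψ.pair (ρ γ x) (ρ' γ y) = Ψ.pair x y
  root_mem : ∀ γ, ∀ β ∈ Ψ.roots, ρ γ β ∈ Ψ.roots
  coroot_eq : ∀ γ, ∀ β ∈ Ψ.roots, Ψ.coroot (ρ γ β) = ρ' γ (Ψ.coroot β)

/-- The norm map `N : x ↦ ∑_{γ ∈ Γ} γ·x`.  For a free lattice `X`, its kernel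
is exactly the kernel of the projection of `X` onto the coinvariants `X_Γ`
modulo torsion. -/
noncomputable def normMap [Fintype Γ] (ρ : Γ →* AddAut X) : X →+ X :=
  ∑ γ : Γ, ((ρ γ : X ≃+ X) : X →+ X)

/-- The projection `i* : X* → X̄*` onto the coinvariant lattice modulo torsion. -/
noncomputable def istar [Fintype Γ] (ρ : Γ →* AddAut X) : X →+ X ⧸ (normMap ρ).ker :=
  QuotientAddGroup.mk' (normMap ρ).ker


/-- The invariant lattice `X̄_* = (X_*)^Γ`. -/
def invY (ρ' : Γ →* AddAut Y) : AddSubgroup Y where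
  carrier := {y | ∀ γ : Γ, ρ' γ y = y}
  zero_mem' := by intro γ; simp
  add_mem' := by intro a b ha hb γ; simp [map_add, ha γ, hb γ]
  neg_mem' := by intro a ha γ; simp [map_neg, ha γ]


/-- Extension of `ℤ`-linear functionals from a saturated submodule of a
finitely generated free `ℤ`-module. -/
lemma extend_int_functional {Y : Type} [AddCommGroup Y]
    [Module.Free ℤ Y] [Module.Finite ℤ Y] (S : Submodule ℤ Y)
    (hsat : ∀ (n : ℤ) (y : Y), n ≠ 0 → n • y ∈ S → y ∈ S)
    (f : S →ₗ[ℤ] ℤ) : ∃ g : Y →ₗ[ℤ] ℤ, ∀ s : S, g s = f s := by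
  haveI : NoZeroSMulDivisors ℤ (Y ⧸ S) := by
    refine ⟨fun {n q} h => ?_⟩
    by_cases hn : n = 0
    · exact Or.inl hn
    · refine Or.inr ?_
      obtain ⟨y, rfl⟩ := Submodule.Quotient.mk_surjective S q
      rw [← Submodule.Quotient.mk_smul, Submodule.Quotient.mk_eq_zero] at h
      rw [Submodule.Quotient.mk_eq_zero]
      exact hsat n y hn h
  haveI : Module.Free ℤ (Y ⧸ S) := Module.free_of_finite_type_torsion_free'
  obtain ⟨s, hs⟩ := Module.projective_lifting_property S.mkQ (LinearMap.id) (S.mkQ_surjective)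
  have hs' : ∀ q : Y ⧸ S, S.mkQ (s q) = q := fun q => congrArg (fun h => h q) hs
  have hr : ∀ y : Y, y - s (S.mkQ y) ∈ S := by
    intro y
    have : S.mkQ (y - s (S.mkQ y)) = 0 := by
      rw [map_sub, hs' (S.mkQ y), sub_self]
    rwa [Submodule.mkQ_apply, Submodule.Quotient.mk_eq_zero] at this
  refine ⟨f.comp ((LinearMap.id - s.comp S.mkQ).codRestrict S (by
    intro y; simpa using hr y)), ?_⟩
  intro t
  have ht : S.mkQ (t : Y) = 0 := by
    rw [Submodule.mkQ_apply, Submodule.Quotient.mk_eq_zero]; exact t.2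
  have hcr : ((LinearMap.id - s.comp S.mkQ).codRestrict S (by intro y; simpa using hr y)) t = t := by
    apply Subtype.ext
    simp [LinearMap.codRestrict, ← Submodule.mkQ_apply, ht]
  rw [LinearMap.comp_apply, hcr]

/-- The lattices `X̄*` (coinvariants of `X*` modulo torsion)
and `X̄_* = (X_*)^Γ` are in perfect duality via
`⟨x̄, λ̄⟩ := ⟨ι(x̄), i_*(λ̄)⟩`, and under this pairing the projection
`i* : X* → X̄*` is the transpose of the inclusion `i_* : X̄_* → X_*`:
`⟨i*(x), λ̄⟩ = ⟨x, i_*(λ̄)⟩` for all `x`, `λ̄`. -/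
theorem coinvariant_invariant_perfect_duality
    [Fintype Γ] [Module.Free ℤ X] [Module.Finite ℤ X]
    [Module.Free ℤ Y] [Module.Finite ℤ Y]
    (Ψ : ZRootDatum X Y) (ρ : Γ →* AddAut X) (ρ' : Γ →* AddAut Y)
    (hact : RDAction Ψ ρ ρ') :
    ∃ p : (X ⧸ (normMap ρ).ker) →+ (↥(invY ρ') →+ ℤ),
      (∀ (x : X) (y : ↥(invY ρ')), p (istar ρ x) y = Ψ.pair x ↑y) ∧
      Function.Bijective (fun a => p a) ∧
      Function.Bijective (fun y => p.flip y) := by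
  classical
  -- composition laws for the actions
  have hcomp : ∀ (γ δ : Γ) (x : X), ρ γ (ρ δ x) = ρ (γ * δ) x := by
    intro γ δ x; rw [map_mul]; rfl
  have hcomp' : ∀ (γ δ : Γ) (y : Y), ρ' γ (ρ' δ y) = ρ' (γ * δ) y := by
    intro γ δ y; rw [map_mul]; rfl
  have hcancel' : ∀ (γ : Γ) (y : Y), ρ' γ (ρ' γ⁻¹ y) = y := by
    intro γ y; rw [hcomp', mul_inv_cancel, map_one]; rfl
  have pair_shift : ∀ (γ : Γ) (x : X) (y : Y),
      Ψ.pair (ρ γ x) y = Ψ.pair x (ρ' γ⁻¹ y) := by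
    intro γ x y
    have := hact.pair_eq γ x (ρ' γ⁻¹ y)
    rwa [hcancel' γ y] at this
  -- norm maps applied
  have hN : ∀ x : X, normMap ρ x = ∑ γ : Γ, ρ γ x := by
    intro x; rw [normMap, AddMonoidHom.finset_sum_apply]; rfl
  have hN' : ∀ y : Y, normMap ρ' y = ∑ γ : Γ, ρ' γ y := by
    intro y; rw [normMap, AddMonoidHom.finset_sum_apply]; rfl
  -- duality of norm maps
  have hNdual : ∀ (x : X) (y : Y), Ψ.pair (normMap ρ x) y = Ψ.pair x (normMap ρ' y) := by
    intro x y
    rw [hN, hN']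
    have h1 : Ψ.pair (∑ γ : Γ, ρ γ x) y = ∑ γ : Γ, Ψ.pair (ρ γ x) y := by
      have h0 := congrArg (fun F => F y) (map_sum Ψ.pair (fun γ : Γ => ρ γ x) Finset.univ)
      simpa [AddMonoidHom.finset_sum_apply] using h0
    have h2 : Ψ.pair x (∑ γ : Γ, ρ' γ y) = ∑ γ : Γ, Ψ.pair x (ρ' γ y) :=
      map_sum (Ψ.pair x) _ _
    rw [h1, h2]
    exact Fintype.sum_equiv (Equiv.inv Γ) _ _ (fun γ => pair_shift γ x y)
  -- the norm map is invariant under precomposition by the action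
  have hNact : ∀ (δ : Γ) (x : X), normMap ρ (ρ δ x) = normMap ρ x := by
    intro δ x
    rw [hN, hN]
    refine Fintype.sum_equiv (Equiv.mulRight δ) _ _ ?_
    intro γ
    rw [hcomp]
    simp
  -- the norm of anything is invariant
  have hNinv : ∀ y : Y, normMap ρ' y ∈ invY ρ' := by
    intro y δ
    rw [hN', map_sum]
    refine Fintype.sum_equiv (Equiv.mulLeft δ) _ _ ?_
    intro γ
    rw [hcomp']
    simp
  -- norm on invariants is multiplication by |Γ|
  have hNsmul : ∀ y ∈ invY ρ', normMap ρ' y = Fintype.card Γ • y := by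
    intro y hy
    rw [hN', Finset.sum_congr rfl (fun γ _ => hy γ), Finset.sum_const, Finset.card_univ]
  -- kernel of the norm pairs to zero with invariants
  have hker : ∀ x ∈ (normMap ρ).ker, ∀ y ∈ invY ρ', Ψ.pair x y = 0 := by
    intro x hx y hy
    have h1 : Ψ.pair x (normMap ρ' y) = 0 := by
      rw [← hNdual, AddMonoidHom.mem_ker.mp hx, map_zero, AddMonoidHom.zero_apply]
    rw [hNsmul y hy, map_nsmul, nsmul_eq_mul] at h1
    rcases mul_eq_zero.mp h1 with h | h
    · exact absurd (Nat.cast_eq_zero.mp h) Fintype.card_ne_zero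
    · exact h
  -- the pairing map out of X
  let q : X →+ (↥(invY ρ') →+ ℤ) :=
    { toFun := fun x => (Ψ.pair x).comp (invY ρ').subtype
      map_zero' := by ext y; simp
      map_add' := by intro a b; ext y; simp }
  have hq : (normMap ρ).ker ≤ q.ker := by
    intro x hx
    rw [AddMonoidHom.mem_ker]
    ext y
    simpa [q] using hker x hx y y.2
  refine ⟨QuotientAddGroup.lift _ q hq, ?_, ?_, ?_⟩
  · intro x y
    rfl
  · constructor
    · -- injectivity of p
      refine (injective_iff_map_eq_zero _).mpr ?_
      intro a ha
      obtain ⟨x, rfl⟩ := QuotientAddGroup.mk'_surjective (normMap ρ).ker a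
      have hx : ∀ y : ↥(invY ρ'), Ψ.pair x (y : Y) = 0 := by
        intro y
        exact congrArg (fun F => F y) ha
      have hNx : x ∈ (normMap ρ).ker := by
        rw [AddMonoidHom.mem_ker]
        apply Ψ.perfect.injective
        show Ψ.pair (normMap ρ x) = Ψ.pair 0
        ext y
        rw [hNdual, map_zero, AddMonoidHom.zero_apply]
        exact hx ⟨normMap ρ' y, hNinv y⟩
      exact (QuotientAddGroup.eq_zero_iff x).mpr hNx
    · -- surjectivity of p
      intro f
      set S : Submodule ℤ Y := AddSubgroup.toIntSubmodule (invY ρ') with hS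
      have hmemS : ∀ y : Y, y ∈ S ↔ y ∈ invY ρ' := fun y => Iff.rfl
      have hsat : ∀ (n : ℤ) (y : Y), n ≠ 0 → n • y ∈ S → y ∈ S := by
        intro n y hn hny
        rw [hmemS]
        intro γ
        have h1 : ρ' γ (n • y) = n • y := ((hmemS _).mp hny) γ
        rw [map_zsmul] at h1
        have h0 : n • (ρ' γ y - y) = 0 := by rw [smul_sub, h1, sub_self]
        rcases smul_eq_zero.mp h0 with h | h
        · exact absurd h hn
        · exact sub_eq_zero.mp h
      -- the functional on S induced by f
      let e : ↥S →+ ↥(invY ρ') :=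
        { toFun := fun t => ⟨(t : Y), (hmemS _).mp t.2⟩
          map_zero' := rfl
          map_add' := fun _ _ => rfl }
      obtain ⟨g, hg⟩ := extend_int_functional S hsat (f.comp e).toIntLinearMap
      obtain ⟨x, hxg⟩ := Ψ.perfect.surjective g.toAddMonoidHom
      refine ⟨istar ρ x, ?_⟩
      ext y
      have h1 : Ψ.pair x (y : Y) = g (y : Y) := congrArg (fun F => F (y : Y)) hxg
      have h2 : g (y : Y) = f y := by
        have := hg ⟨(y : Y), (hmemS _).mpr y.2⟩
        simpa [e] using this
      show Ψ.pair x (y : Y) = f y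
      rw [h1, h2]
  · constructor
    · -- injectivity of p.flip
      intro y₁ y₂ h
      apply Subtype.ext
      apply Ψ.perfect'.injective
      show Ψ.pair.flip (y₁ : Y) = Ψ.pair.flip (y₂ : Y)
      ext x
      exact congrArg (fun F => F (istar ρ x)) h
    · -- surjectivity of p.flip
      intro g
      obtain ⟨y, hy⟩ := Ψ.perfect'.surjective (g.comp (istar ρ))
      have hyx : ∀ x : X, Ψ.pair x y = g (istar ρ x) := by
        intro x
        have := congrArg (fun F => F x) hy
        simpa [AddMonoidHom.flip_apply] using this
      have histar : ∀ (δ : Γ) (x : X), istar ρ (ρ δ x) = istar ρ x := by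
        intro δ x
        show ((ρ δ x : X) : X ⧸ (normMap ρ).ker) = ((x : X) : X ⧸ (normMap ρ).ker)
        rw [QuotientAddGroup.eq_iff_sub_mem, AddMonoidHom.mem_ker, map_sub,
          hNact δ x, sub_self]
      have hmem : y ∈ invY ρ' := by
        intro γ
        apply Ψ.perfect'.injective
        show Ψ.pair.flip (ρ' γ y) = Ψ.pair.flip y
        ext x
        have h1 : Ψ.pair x (ρ' γ y) = Ψ.pair (ρ γ⁻¹ x) y := by
          rw [pair_shift γ⁻¹ x y, inv_inv]
        simp only [AddMonoidHom.flip_apply]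
        rw [h1, hyx (ρ γ⁻¹ x), histar γ⁻¹ x, hyx x]
      refine ⟨⟨y, hmem⟩, ?_⟩
      ext x
      show Ψ.pair x y = g (istar ρ x)
      exact hyx x
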